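/- Let α₁ = (3+√13)/2 and α₂ = (3−√13)/2. Then no nonempty finite product of real numbers, each of the form ε·α₁^l + δ or ε·α₂^s + δ with ε, δ ∈ {1, −1} and integers l, s ≥ 1, is equal to 1 or −1. -/

import Mathlib

/-- `pp l = (p, q)` with `α^l = p + q*α` whenever `α^2 = 3α + 1`. -/
private def pp : ℕ → ℤ × ℤ
  | 0 => (1, 0)
  | n + 1 => ((pp n).2, (pp n).1 + 3 * (pp n).2)

private lemma pp_nonneg (l : ℕ) : 0 ≤ (pp l).1 ∧ 0 ≤ (pp l).2 := by
  induction l with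
  | zero => simp [pp]
  | succ n ih => simp only [pp]; constructor <;> nlinarith [ih.1, ih.2]

private lemma pp_q_pos (l : ℕ) (hl : 1 ≤ l) : 1 ≤ (pp l).2 := by
  induction l with
  | zero => omega
  | succ n ih =>
    rcases Nat.eq_zero_or_pos n with h | h
    · subst h; simp [pp]
    · simp only [pp]; nlinarith [(pp_nonneg n).1, ih h]

private lemma pp_pow (α : ℝ) (hα : α ^ 2 = 3 * α + 1) (l : ℕ) :
    α ^ l = ((pp l).1 : ℝ) + ((pp l).2 : ℝ) * α := by
  induction l with
  | zero => simp [pp]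
  | succ n ih =>
    have h : α ^ (n + 1) = α ^ n * α := by ring
    rw [h, ih]
    simp only [pp]
    push_cast
    linear_combination ((pp n).2 : ℝ) * hα

private lemma pp_norm (l : ℕ) :
    (pp l).1 ^ 2 + 3 * (pp l).1 * (pp l).2 - (pp l).2 ^ 2 = (-1) ^ l := by
  induction l with
  | zero => simp [pp]
  | succ n ih => simp only [pp, pow_succ]; nlinarith [ih]

private lemma T_ge_three (l : ℕ) (hl : 1 ≤ l) : 3 ≤ 2 * (pp l).1 + 3 * (pp l).2 := by
  nlinarith [(pp_nonneg l).1, pp_q_pos l hl]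

private lemma T_ge_eleven (l : ℕ) (hl : 2 ≤ l) : 11 ≤ 2 * (pp l).1 + 3 * (pp l).2 := by
  obtain ⟨m, rfl⟩ : ∃ m, l = m + 2 := ⟨l - 2, by omega⟩
  rcases Nat.eq_zero_or_pos m with rfl | hm
  · simp [pp]
  · simp only [pp]
    nlinarith [(pp_nonneg m).1, pp_q_pos m hm]

private lemma sqrt13_irr : Irrational (Real.sqrt 13) := by
  have := (by norm_num : Nat.Prime 13).irrational_sqrt
  simpa using this

private lemma key (L : List ℝ) (hne : L ≠ [])
    (h : ∀ z ∈ L, ∃ a b N : ℤ, 2 * z = (a : ℝ) + (b : ℝ) * Real.sqrt 13 ∧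
        a ^ 2 - 13 * b ^ 2 = 4 * N ∧ 3 ≤ |N|) :
    ∃ a b N : ℤ, (2 : ℝ) ^ L.length * L.prod = (a : ℝ) + (b : ℝ) * Real.sqrt 13 ∧
      a ^ 2 - 13 * b ^ 2 = 4 ^ L.length * N ∧ 3 ≤ |N| := by
  induction L with
  | nil => exact absurd rfl hne
  | cons z L' ih =>
    obtain ⟨a, b, N, hz, hn, hN⟩ := h z (by simp)
    rcases eq_or_ne L' [] with rfl | hL'
    · refine ⟨a, b, N, ?_, by simpa using hn, hN⟩
      simpa using hz
    · obtain ⟨A, B, M, hP, hnP, hM⟩ := ih hL' (fun w hw => h w (by simp [hw]))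
      have hs : Real.sqrt 13 ^ 2 = 13 := Real.sq_sqrt (by norm_num)
      refine ⟨a * A + 13 * b * B, a * B + b * A, N * M, ?_, ?_, ?_⟩
      · have hlen : (z :: L').length = L'.length + 1 := rfl
        rw [hlen, List.prod_cons]
        push_cast
        have e1 : (2 : ℝ) ^ (L'.length + 1) * (z * L'.prod)
            = (2 * z) * ((2 : ℝ) ^ L'.length * L'.prod) := by ring
        rw [e1, hz, hP]
        linear_combination ((b : ℝ) * B) * hs
      · have hlen : (z :: L').length = L'.length + 1 := rfl
        rw [hlen]
        have e2 : (4 : ℤ) ^ (L'.length + 1) * (N * M) = (4 * N) * (4 ^ L'.length * M) := by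
          ring
        rw [e2, ← hn, ← hnP]
        ring
      · rw [abs_mul]
        nlinarith [abs_nonneg N, abs_nonneg M]

/-- Let `α₁ = (3+√13)/2` and `α₂ = (3−√13)/2`.  No nonempty finite product of
real numbers, each of the form `ε·α₁^l + δ` or `ε·α₂^s + δ` with
`ε, δ ∈ {1, −1}` and integers `l, s ≥ 1`, equals `1` or `−1`. -/
theorem no_unit_product_of_eigenvalue_factors
    (α₁ α₂ : ℝ) (h₁ : α₁ = (3 + Real.sqrt 13) / 2) (h₂ : α₂ = (3 - Real.sqrt 13) / 2)
    (L : List ℝ) (hne : L ≠ [])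
    (hmem : ∀ z ∈ L, ∃ ε δ : ℝ, (ε = 1 ∨ ε = -1) ∧ (δ = 1 ∨ δ = -1) ∧
      ∃ l : ℕ, 1 ≤ l ∧ (z = ε * α₁ ^ l + δ ∨ z = ε * α₂ ^ l + δ)) :
    L.prod ≠ 1 ∧ L.prod ≠ -1 := by
  have hs : Real.sqrt 13 ^ 2 = 13 := Real.sq_sqrt (by norm_num)
  have hα₁ : α₁ ^ 2 = 3 * α₁ + 1 := by rw [h₁]; linear_combination hs / 4
  have hα₂ : α₂ ^ 2 = 3 * α₂ + 1 := by rw [h₂]; linear_combination hs / 4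
  -- every factor satisfies the quadratic-integer condition
  have hfac : ∀ z ∈ L, ∃ a b N : ℤ, 2 * z = (a : ℝ) + (b : ℝ) * Real.sqrt 13 ∧
      a ^ 2 - 13 * b ^ 2 = 4 * N ∧ 3 ≤ |N| := by
    intro z hz
    obtain ⟨ε, δ, hε, hδ, l, hl, hform⟩ := hmem z hz
    obtain ⟨e, he, heε⟩ : ∃ e : ℤ, (e = 1 ∨ e = -1) ∧ (e : ℝ) = ε := by
      rcases hε with h | h
      · exact ⟨1, Or.inl rfl, by rw [h]; norm_num⟩
      · exact ⟨-1, Or.inr rfl, by rw [h]; norm_num⟩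
    obtain ⟨d, hd, hdδ⟩ : ∃ d : ℤ, (d = 1 ∨ d = -1) ∧ (d : ℝ) = δ := by
      rcases hδ with h | h
      · exact ⟨1, Or.inl rfl, by rw [h]; norm_num⟩
      · exact ⟨-1, Or.inr rfl, by rw [h]; norm_num⟩
    set p := (pp l).1 with hp
    set q := (pp l).2 with hq
    have he2 : e ^ 2 = 1 := by rcases he with rfl | rfl <;> norm_num
    have hd2 : d ^ 2 = 1 := by rcases hd with rfl | rfl <;> norm_num
    -- the norm value
    have habsN : 3 ≤ |1 + (-1) ^ l + d * e * (2 * p + 3 * q)| := by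
      have hde : d * e = 1 ∨ d * e = -1 := by
        rcases hd with rfl | rfl <;> rcases he with rfl | rfl <;> norm_num
      rcases Nat.even_or_odd l with hev | hod
      · have h2 : 2 ≤ l := by
          rcases hev with ⟨k, hk⟩; omega
        have hT := T_ge_eleven l h2
        rw [hev.neg_one_pow, le_abs]
        rcases hde with h | h <;> rw [h]
        · left; linarith
        · right; linarith
      · have hT := T_ge_three l hl
        rw [hod.neg_one_pow, le_abs]
        rcases hde with h | h <;> rw [h]
        · left; linarith
        · right; linarith
    have hnorm : ∀ (b' : ℤ), b' = e * q ∨ b' = -(e * q) →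
        (2 * d + e * (2 * p + 3 * q)) ^ 2 - 13 * b' ^ 2
          = 4 * (1 + (-1) ^ l + d * e * (2 * p + 3 * q)) := by
      intro b' hb'
      have hpn := pp_norm l
      rw [← hp, ← hq] at hpn
      rcases hb' with rfl | rfl <;>
        linear_combination 4 * e ^ 2 * hpn + 4 * (-1 : ℤ) ^ l * he2 + 4 * hd2
    rcases hform with hz1 | hz2
    · refine ⟨2 * d + e * (2 * p + 3 * q), e * q, 1 + (-1) ^ l + d * e * (2 * p + 3 * q),
        ?_, hnorm _ (Or.inl rfl), habsN⟩
      rw [hz1, pp_pow α₁ hα₁ l, ← heε, ← hdδ, ← hp, ← hq, h₁]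
      push_cast
      ring
    · refine ⟨2 * d + e * (2 * p + 3 * q), -(e * q), 1 + (-1) ^ l + d * e * (2 * p + 3 * q),
        ?_, hnorm _ (Or.inr rfl), habsN⟩
      rw [hz2, pp_pow α₂ hα₂ l, ← heε, ← hdδ, ← hp, ← hq, h₂]
      push_cast
      ring
  obtain ⟨a, b, N, heq, hn, hN⟩ := key L hne hfac
  have main : ∀ r : ℤ, r ^ 2 = 1 → L.prod ≠ (r : ℝ) := by
    intro r hr2 hpr
    rw [hpr] at heq
    have hb : b = 0 := by
      by_contra hb
      apply sqrt13_irr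
      have hbR : (b : ℝ) ≠ 0 := Int.cast_ne_zero.mpr hb
      refine ⟨((2 ^ L.length * r - a : ℤ) : ℚ) / (b : ℚ), ?_⟩
      have : Real.sqrt 13 = ((2 ^ L.length * r - a : ℤ) : ℝ) / (b : ℝ) := by
        field_simp
        push_cast
        linarith [heq]
      rw [this]
      norm_num
    have ha : (a : ℝ) = 2 ^ L.length * r := by
      rw [hb] at heq; push_cast at heq ⊢; linarith [heq]
    have haZ : a = 2 ^ L.length * r := by exact_mod_cast ha
    rw [haZ, hb] at hn
    have h24 : (4 : ℤ) ^ L.length = ((2 : ℤ) ^ L.length) ^ 2 := by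
      rw [show (4 : ℤ) = 2 ^ 2 by norm_num, ← pow_mul, mul_comm, pow_mul]
    have h4 : (4 : ℤ) ^ L.length * 1 = 4 ^ L.length * N := by
      rw [← hn, h24]; linear_combination (-(((2 : ℤ) ^ L.length) ^ 2)) * hr2
    have hN1 : N = 1 := by
      have := mul_left_cancel₀ (a := (4 : ℤ) ^ L.length) (by positivity) h4
      omega
    rw [hN1] at hN
    norm_num at hN
  constructor
  · have := main 1 (by norm_num)
    simpa using this
  · have := main (-1) (by norm_num)
    simpa using this
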